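/- Normalization of the bottom-up queue-jumping observation model: let r be a strict partial order on a finite type A with |A| = m ≥ 1, and let p ∈ [0,1]. For an enumeration Y : Fin m ≃ A define q_U(Y) = ∏_{j=1}^{m} ( p/j + (1 − p) · C̃_{Y_j}(r[{Y_1, …, Y_j}]) / C(r[{Y_1, …, Y_j}]) ). Then the sum of q_U(Y) over all m! enumerations Y of A equals 1. -/

import Mathlib

open scoped Classical

/-- `Y` is a linear extension of `r`: for positions `i < j`, the later element is never
above the earlier one. -/
def IsLinExt {A : Type*} {n : ℕ} (r : A → A → Prop) (Y : Fin n ≃ A) : Prop :=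
  ∀ i j : Fin n, i < j → ¬ r (Y j) (Y i)

/-- `C(r)`: the number of linear extensions of `r`. -/
noncomputable def numExt {A : Type*} [Fintype A] (r : A → A → Prop) : ℕ :=
  Nat.card {Y : Fin (Fintype.card A) ≃ A // IsLinExt r Y}

/-- `C̃_a(r)`: the number of linear extensions of `r` whose last entry is `a`. -/
noncomputable def numExtLast {A : Type*} [Fintype A] (r : A → A → Prop) (a : A) : ℕ :=
  Nat.card {Y : Fin (Fintype.card A) ≃ A //
    IsLinExt r Y ∧ ∀ i : Fin (Fintype.card A), (i : ℕ) = Fintype.card A - 1 → Y i = a}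

/-- The suborder `r[O]`: the restriction of `r` to the subset `O`. -/
def subrel {A : Type*} (r : A → A → Prop) (O : Set A) : O → O → Prop :=
  fun x y => r (x : A) (y : A)

lemma isLinExt_congr {A B : Type*} [Fintype A] [Fintype B] (e : A ≃ B)
    {r : A → A → Prop} {s : B → B → Prop} (h : ∀ x y, r x y ↔ s (e x) (e y))
    (hc : Fintype.card A = Fintype.card B) (Y : Fin (Fintype.card A) ≃ A) :
    IsLinExt r Y ↔ IsLinExt s ((Equiv.equivCongr (finCongr hc) e) Y) := by
  constructor
  · intro hY i j hij hr
    have hr' : r (Y ((finCongr hc).symm j)) (Y ((finCongr hc).symm i)) := (h _ _).mpr hr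
    exact hY ((finCongr hc).symm i) ((finCongr hc).symm j) hij hr'
  · intro hY i j hij hr
    exact hY (finCongr hc i) (finCongr hc j) hij ((h _ _).mp hr)

lemma numExt_congr {A B : Type*} [Fintype A] [Fintype B] (e : A ≃ B)
    (r : A → A → Prop) (s : B → B → Prop) (h : ∀ x y, r x y ↔ s (e x) (e y)) :
    numExt r = numExt s := by
  have hc : Fintype.card A = Fintype.card B := Fintype.card_congr e
  exact Nat.card_congr (Equiv.subtypeEquiv (Equiv.equivCongr (finCongr hc) e)
    (isLinExt_congr e h hc))

lemma numExtLast_congr {A B : Type*} [Fintype A] [Fintype B] (e : A ≃ B)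
    (r : A → A → Prop) (s : B → B → Prop) (h : ∀ x y, r x y ↔ s (e x) (e y)) (a : A) :
    numExtLast r a = numExtLast s (e a) := by
  have hc : Fintype.card A = Fintype.card B := Fintype.card_congr e
  refine Nat.card_congr (Equiv.subtypeEquiv (Equiv.equivCongr (finCongr hc) e) ?_)
  intro Y
  refine and_congr (isLinExt_congr e h hc Y) ?_
  constructor
  · intro hl i hi
    have h2 : Y ((finCongr hc).symm i) = a := hl _ (by rw [show ((finCongr hc).symm i : ℕ) = (i : ℕ) from rfl, hi, hc])
    exact congrArg e h2
  · intro hl i hi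
    have h2 : e (Y ((finCongr hc).symm (finCongr hc i))) = e a := hl (finCongr hc i) (by rw [show ((finCongr hc i : ℕ)) = (i : ℕ) from rfl, hi, hc])
    exact e.injective h2

lemma numExt_pos {A : Type*} [Fintype A] (r : A → A → Prop)
    (hirr : Irreflexive r) (htrans : Transitive r) : 0 < numExt r := by
  classical
  let le' : A → A → Prop := fun a b => a = b ∨ r a b
  haveI hre : IsRefl A le' := ⟨fun a => Or.inl rfl⟩
  haveI htr : IsTrans A le' := by
    constructor
    intro a b c hab hbc
    rcases hab with rfl | hab
    · exact hbc
    · rcases hbc with rfl | hbc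
      · exact Or.inr hab
      · exact Or.inr (htrans hab hbc)
  haveI has : IsAntisymm A le' := by
    constructor
    intro a b hab hba
    rcases hab with rfl | hab
    · rfl
    · rcases hba with rfl | hba
      · rfl
      · exact absurd (htrans hab hba) (hirr a)
  haveI : IsPreorder A le' := ⟨⟩
  haveI : IsPartialOrder A le' := ⟨⟩
  obtain ⟨s, hlin, hrs⟩ := extend_partialOrder le'
  haveI := hlin
  letI : LinearOrder A :=
    { le := s
      le_refl := fun a => refl_of s a
      le_trans := fun a b c => trans_of s
      le_antisymm := fun a b => antisymm_of s
      le_total := fun a b => total_of s a b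
      toDecidableLE := fun a b => Classical.dec _ }
  let Y := monoEquivOfFin A rfl
  have hY : IsLinExt r Y.toEquiv := by
    intro i j hij hr
    have h1 : s (Y j) (Y i) := hrs _ _ (Or.inr hr)
    have h2 : s (Y i) (Y j) := Y.monotone hij.le
    have : (Y i : A) = Y j := antisymm_of s h2 h1
    have : i = j := Y.injective this
    exact absurd this hij.ne
  haveI : Nonempty {Y : Fin (Fintype.card A) ≃ A // IsLinExt r Y} := ⟨⟨Y.toEquiv, hY⟩⟩
  exact Nat.card_pos

lemma sum_numExtLast {A : Type*} [Fintype A] (r : A → A → Prop) (h : 0 < Fintype.card A) :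
    ∑ a : A, numExtLast r a = numExt r := by
  classical
  rw [numExt, Nat.card_eq_fintype_card,
    ← Fintype.card_congr (Equiv.sigmaFiberEquiv
      (fun Y : {Y : Fin (Fintype.card A) ≃ A // IsLinExt r Y} =>
        Y.1 ⟨Fintype.card A - 1, by omega⟩)),
    Fintype.card_sigma]
  refine Finset.sum_congr rfl fun a _ => ?_
  rw [numExtLast, Nat.card_eq_fintype_card]
  refine Fintype.card_congr ((Equiv.subtypeSubtypeEquivSubtypeInter
    (fun Y : Fin (Fintype.card A) ≃ A => IsLinExt r Y)
    (fun Y => Y ⟨Fintype.card A - 1, by omega⟩ = a)).trans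
    (Equiv.subtypeEquivRight ?_)).symm
  intro Y
  constructor
  · rintro ⟨hY, hla⟩
    refine ⟨hY, fun i hi => ?_⟩
    have : i = (⟨Fintype.card A - 1, by omega⟩ : Fin (Fintype.card A)) := Fin.ext hi
    rw [this]; exact hla
  · rintro ⟨hY, hla⟩
    exact ⟨hY, hla _ rfl⟩


noncomputable def decFun {A : Type*} [DecidableEq A] {n : ℕ}
    (x : Σ a : A, (Fin n ≃ {y : A // y ≠ a})) : Fin (n + 1) ≃ A :=
  finSuccEquivLast.trans (((Equiv.optionSubtype x.1).symm x.2 : {e : Option (Fin n) ≃ A // e none = x.1}) : Option (Fin n) ≃ A)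

lemma decFun_castSucc {A : Type*} [DecidableEq A] {n : ℕ}
    (x : Σ a : A, (Fin n ≃ {y : A // y ≠ a})) (i : Fin n) :
    decFun x (Fin.castSucc i) = (x.2 i : A) := by
  simp [decFun]

lemma decFun_last {A : Type*} [DecidableEq A] {n : ℕ}
    (x : Σ a : A, (Fin n ≃ {y : A // y ≠ a})) :
    decFun x (Fin.last n) = x.1 := by
  simp [decFun]

lemma decFun_bijective {A : Type*} [DecidableEq A] {n : ℕ} :
    Function.Bijective (decFun (A := A) (n := n)) := by
  constructor
  · rintro ⟨a, Z⟩ ⟨b, W⟩ h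
    have hab : a = b := by
      have h1 : (decFun ⟨a, Z⟩) (Fin.last n) = a := decFun_last _
      have h2 : (decFun ⟨b, W⟩) (Fin.last n) = b := decFun_last _
      rw [← h1, ← h2, h]
    subst hab
    refine Sigma.ext rfl (heq_of_eq ?_)
    ext i
    have : decFun ⟨a, Z⟩ (Fin.castSucc i) = decFun ⟨a, W⟩ (Fin.castSucc i) := by rw [h]
    rw [decFun_castSucc, decFun_castSucc] at this
    exact this
  · intro Y
    refine ⟨⟨Y (Fin.last n), Equiv.optionSubtype (Y (Fin.last n))
      ⟨finSuccEquivLast.symm.trans Y, by simp⟩⟩, ?_⟩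
    ext i
    induction i using Fin.lastCases with
    | last => rw [decFun_last]
    | cast i =>
      rw [decFun_castSucc]
      simp
noncomputable def dec (A : Type*) [DecidableEq A] (n : ℕ) :
    (Σ a : A, (Fin n ≃ {y : A // y ≠ a})) ≃ (Fin (n + 1) ≃ A) :=
  Equiv.ofBijective _ decFun_bijective

lemma dec_apply {A : Type*} [DecidableEq A] {n : ℕ}
    (x : Σ a : A, (Fin n ≃ {y : A // y ≠ a})) : dec A n x = decFun x := rfl

universe u

theorem auxsum : ∀ (m : ℕ) (A : Type u) [Fintype A] [DecidableEq A],
    Fintype.card A = m → ∀ (r : A → A → Prop), Irreflexive r → Transitive r → ∀ p : ℝ,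
    ∑ Y : Fin m ≃ A, ∏ j : Fin m,
      (p / (((j : ℕ) + 1 : ℕ) : ℝ) +
        (1 - p) *
          ((numExtLast (subrel r {a : A | ∃ i : Fin m, i ≤ j ∧ Y i = a})
              ⟨Y j, ⟨j, le_refl j, rfl⟩⟩ : ℕ) : ℝ) /
            ((numExt (subrel r {a : A | ∃ i : Fin m, i ≤ j ∧ Y i = a}) : ℕ) : ℝ)) = 1 := by
  intro m
  induction m with
  | zero =>
    intro A _ _ hcard r hirr htrans p
    haveI : IsEmpty A := Fintype.card_eq_zero_iff.mp hcard
    haveI : Unique (Fin 0 ≃ A) :=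
      ⟨⟨Equiv.equivOfIsEmpty (Fin 0) A⟩, fun e => by ext i; exact i.elim0⟩
    simp
  | succ n ih =>
    intro A _ _ hcard r hirr htrans p
    have hcard' : ∀ a : A, Fintype.card {y : A // y ≠ a} = n := by
      intro a
      simp [Fintype.card_subtype_compl, hcard]
    have hirr' : ∀ a : A, Irreflexive (fun x y : {y : A // y ≠ a} => r x.1 y.1) :=
      fun a x => hirr x.1
    have htrans' : ∀ a : A, Transitive (fun x y : {y : A // y ≠ a} => r x.1 y.1) :=
      fun a x y z hxy hyz => htrans hxy hyz
    have hmain : ∀ (a : A) (Z : Fin n ≃ {y : A // y ≠ a}),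
        (∏ j : Fin (n+1),
          (p / (((j : ℕ) + 1 : ℕ) : ℝ) +
            (1 - p) *
              ((numExtLast (subrel r {b : A | ∃ i : Fin (n+1), i ≤ j ∧ (dec A n ⟨a, Z⟩) i = b})
                  ⟨(dec A n ⟨a, Z⟩) j, ⟨j, le_refl j, rfl⟩⟩ : ℕ) : ℝ) /
                ((numExt (subrel r {b : A | ∃ i : Fin (n+1), i ≤ j ∧ (dec A n ⟨a, Z⟩) i = b}) : ℕ) : ℝ)))
        = (∏ j : Fin n,
            (p / (((j : ℕ) + 1 : ℕ) : ℝ) +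
              (1 - p) *
                ((numExtLast (subrel (fun x y : {y : A // y ≠ a} => r x.1 y.1)
                    {z : {y : A // y ≠ a} | ∃ i : Fin n, i ≤ j ∧ Z i = z})
                    ⟨Z j, ⟨j, le_refl j, rfl⟩⟩ : ℕ) : ℝ) /
                  ((numExt (subrel (fun x y : {y : A // y ≠ a} => r x.1 y.1)
                    {z : {y : A // y ≠ a} | ∃ i : Fin n, i ≤ j ∧ Z i = z}) : ℕ) : ℝ)))
          * (p / ((n + 1 : ℕ) : ℝ) +
              (1 - p) * ((numExtLast r a : ℕ) : ℝ) / ((numExt r : ℕ) : ℝ)) := by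
      intro a Z
      set Y : Fin (n+1) ≃ A := dec A n ⟨a, Z⟩ with hYdef
      have hYc : ∀ i : Fin n, Y (Fin.castSucc i) = (Z i : A) := fun i => decFun_castSucc ⟨a, Z⟩ i
      have hYl : Y (Fin.last n) = a := decFun_last ⟨a, Z⟩
      rw [Fin.prod_univ_castSucc]
      congr 1
      · refine Finset.prod_congr rfl fun j _ => ?_
        have hne : ∀ b : A,
            b ∈ {b : A | ∃ i : Fin (n+1), i ≤ Fin.castSucc j ∧ Y i = b} → b ≠ a := by
          rintro b ⟨i, hi, rfl⟩ hba
          have hlt : i < Fin.last n := lt_of_le_of_lt hi (Fin.castSucc_lt_last j)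
          exact absurd (Y.injective (hba.trans hYl.symm)) hlt.ne
        have hfwd : ∀ i : Fin (n+1), i ≤ Fin.castSucc j →
            ∃ i' : Fin n, i' ≤ j ∧ Fin.castSucc i' = i := by
          intro i hi
          have h1 : (i : ℕ) ≤ (j : ℕ) := hi
          have h2 : (i : ℕ) < n + 1 := i.isLt
          have h3 : (j : ℕ) < n := j.isLt
          refine ⟨⟨(i : ℕ), by omega⟩, ?_, ?_⟩
          · exact h1
          · apply Fin.ext
            simp
        have hmem1 : ∀ (b : A)
            (hb : b ∈ {b : A | ∃ i : Fin (n+1), i ≤ Fin.castSucc j ∧ Y i = b}) (h : b ≠ a),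
            (⟨b, h⟩ : {y : A // y ≠ a}) ∈
              {z : {y : A // y ≠ a} | ∃ i : Fin n, i ≤ j ∧ Z i = z} := by
          rintro b ⟨i, hi, rfl⟩ h
          obtain ⟨i', hij, rfl⟩ := hfwd i hi
          exact ⟨i', hij, Subtype.ext (hYc i').symm⟩
        have hmem2 : ∀ z : {y : A // y ≠ a},
            z ∈ {z : {y : A // y ≠ a} | ∃ i : Fin n, i ≤ j ∧ Z i = z} →
            (z : A) ∈ {b : A | ∃ i : Fin (n+1), i ≤ Fin.castSucc j ∧ Y i = b} := by
          rintro z ⟨i, hij, rfl⟩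
          refine ⟨Fin.castSucc i, ?_, hYc i⟩
          exact Fin.castSucc_le_castSucc_iff.mpr hij
        let ε : ↥{b : A | ∃ i : Fin (n+1), i ≤ Fin.castSucc j ∧ Y i = b} ≃
            ↥{z : {y : A // y ≠ a} | ∃ i : Fin n, i ≤ j ∧ Z i = z} :=
          { toFun := fun b => ⟨⟨b.1, hne b.1 b.2⟩, hmem1 b.1 b.2 _⟩
            invFun := fun z => ⟨(z.1 : A), hmem2 z.1 z.2⟩
            left_inv := fun b => rfl
            right_inv := fun z => Subtype.ext (Subtype.ext rfl) }
        have h1 : numExt (subrel r {b : A | ∃ i : Fin (n+1), i ≤ Fin.castSucc j ∧ Y i = b})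
            = numExt (subrel (fun x y : {y : A // y ≠ a} => r x.1 y.1)
                {z : {y : A // y ≠ a} | ∃ i : Fin n, i ≤ j ∧ Z i = z}) :=
          numExt_congr ε _ _ (fun x y => Iff.rfl)
        have h2 : numExtLast (subrel r {b : A | ∃ i : Fin (n+1), i ≤ Fin.castSucc j ∧ Y i = b})
              ⟨Y (Fin.castSucc j), ⟨Fin.castSucc j, le_refl (Fin.castSucc j), rfl⟩⟩
            = numExtLast (subrel (fun x y : {y : A // y ≠ a} => r x.1 y.1)
                {z : {y : A // y ≠ a} | ∃ i : Fin n, i ≤ j ∧ Z i = z})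
              ⟨Z j, ⟨j, le_refl j, rfl⟩⟩ := by
          refine (numExtLast_congr ε
            (subrel r {b : A | ∃ i : Fin (n+1), i ≤ Fin.castSucc j ∧ Y i = b})
            (subrel (fun x y : {y : A // y ≠ a} => r x.1 y.1)
              {z : {y : A // y ≠ a} | ∃ i : Fin n, i ≤ j ∧ Z i = z})
            (fun x y => Iff.rfl) _).trans ?_
          congr 1
          exact Subtype.ext (Subtype.ext (hYc j))
        simp only [Fin.coe_castSucc]
        rw [h1, h2]
      · have hall : ∀ b : A, b ∈ {b : A | ∃ i : Fin (n+1), i ≤ Fin.last n ∧ Y i = b} :=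
          fun b => ⟨Y.symm b, Fin.le_last _, Y.apply_symm_apply b⟩
        let e : ↥{b : A | ∃ i : Fin (n+1), i ≤ Fin.last n ∧ Y i = b} ≃ A :=
          Equiv.subtypeUnivEquiv hall
        have h1 : numExt (subrel r {b : A | ∃ i : Fin (n+1), i ≤ Fin.last n ∧ Y i = b})
            = numExt r := numExt_congr e _ _ (fun x y => Iff.rfl)
        have h2 : numExtLast (subrel r {b : A | ∃ i : Fin (n+1), i ≤ Fin.last n ∧ Y i = b})
              ⟨Y (Fin.last n), ⟨Fin.last n, le_refl (Fin.last n), rfl⟩⟩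
            = numExtLast r a :=
          (numExtLast_congr e
            (subrel r {b : A | ∃ i : Fin (n+1), i ≤ Fin.last n ∧ Y i = b}) r
            (fun x y => Iff.rfl) _).trans (congrArg (numExtLast r) hYl)
        simp only [Fin.val_last]
        rw [h1, h2]
    have hstep : ∀ a : A,
        (∑ Z : Fin n ≃ {y : A // y ≠ a}, ∏ j : Fin (n+1),
          (p / (((j : ℕ) + 1 : ℕ) : ℝ) +
            (1 - p) *
              ((numExtLast (subrel r {b : A | ∃ i : Fin (n+1), i ≤ j ∧ (dec A n ⟨a, Z⟩) i = b})
                  ⟨(dec A n ⟨a, Z⟩) j, ⟨j, le_refl j, rfl⟩⟩ : ℕ) : ℝ) /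
                ((numExt (subrel r {b : A | ∃ i : Fin (n+1), i ≤ j ∧ (dec A n ⟨a, Z⟩) i = b}) : ℕ) : ℝ)))
        = p / ((n + 1 : ℕ) : ℝ) +
            (1 - p) * ((numExtLast r a : ℕ) : ℝ) / ((numExt r : ℕ) : ℝ) := by
      intro a
      refine Eq.trans (Finset.sum_congr rfl fun Z _ => hmain a Z) ?_
      rw [← Finset.sum_mul, ih {y : A // y ≠ a} (hcard' a)
        (fun x y : {y : A // y ≠ a} => r x.1 y.1) (hirr' a) (htrans' a) p, one_mul]
    rw [← Equiv.sum_comp (dec A n)]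
    rw [← Finset.univ_sigma_univ, Finset.sum_sigma]
    have hfinal :
        (∑ a : A, (p / ((n + 1 : ℕ) : ℝ) +
          (1 - p) * ((numExtLast r a : ℕ) : ℝ) / ((numExt r : ℕ) : ℝ))) = 1 := by
      have hpos : 0 < numExt r := numExt_pos r hirr htrans
      have hne : ((numExt r : ℕ) : ℝ) ≠ 0 := Nat.cast_ne_zero.mpr hpos.ne'
      have hsum2 : ∑ a : A, (1 - p) * ((numExtLast r a : ℕ) : ℝ) / ((numExt r : ℕ) : ℝ)
          = 1 - p := by
        rw [← Finset.sum_div, ← Finset.mul_sum, ← Nat.cast_sum,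
          sum_numExtLast r (by rw [hcard]; omega), mul_div_assoc, div_self hne, mul_one]
      rw [Finset.sum_add_distrib, hsum2, Finset.sum_const, Finset.card_univ, hcard,
        nsmul_eq_mul]
      have hne2 : ((n + 1 : ℕ) : ℝ) ≠ 0 := by positivity
      field_simp
      ring
    exact Eq.trans (Finset.sum_congr rfl fun a _ => hstep a) hfinal


/-- Normalization of the bottom-up queue-jumping observation model: the probabilities
`q_U(Y)` sum to `1` over all `m!` enumerations `Y` of `A`. -/
theorem stmt10 {A : Type*} [Fintype A] [DecidableEq A] (m : ℕ) (hm : 1 ≤ m)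
    (hcard : Fintype.card A = m)
    (r : A → A → Prop) (hirr : Irreflexive r) (htrans : Transitive r)
    (p : ℝ) (hp0 : 0 ≤ p) (hp1 : p ≤ 1) :
    ∑ Y : Fin m ≃ A, ∏ j : Fin m,
      (p / (((j : ℕ) + 1 : ℕ) : ℝ) +
        (1 - p) *
          ((numExtLast (subrel r {a : A | ∃ i : Fin m, i ≤ j ∧ Y i = a})
              ⟨Y j, ⟨j, le_refl j, rfl⟩⟩ : ℕ) : ℝ) /
            ((numExt (subrel r {a : A | ∃ i : Fin m, i ≤ j ∧ Y i = a}) : ℕ) : ℝ)) = 1 :=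
  auxsum m A hcard r hirr htrans p
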